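/- If T = S₁⋯S_k with unique separators #ᵢ (each occurring exactly once in T, as the last character of Sᵢ), then any substring of T containing some #ᵢ in a non-final position occurs exactly once in T. -/

import Mathlib

def EndPos1 {α : Type*} (S w : List α) : Set ℕ :=
  {j | 1 ≤ j ∧ w.length ≤ j ∧ j ≤ S.length ∧ w <:+ S.take j}

private lemma pos_unique' {α : Type*} [DecidableEq α] {T : List α} {c : α}
    (h : T.count c = 1) {a b : ℕ} (hab : a < b)
    (ha : T[a]? = some c) (hb : T[b]? = some c) : False := by
  have hbT : b < T.length := List.getElem?_eq_some_iff.mp hb |>.1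
  have hmem1 : c ∈ T.take (a + 1) := by
    have : (T.take (a + 1))[a]? = some c := by
      rw [List.getElem?_take_of_lt (by omega)]; exact ha
    exact List.mem_of_getElem? this
  have hmem2 : c ∈ T.drop (a + 1) := by
    have : (T.drop (a + 1))[b - (a + 1)]? = some c := by
      rw [List.getElem?_drop]
      rwa [show a + 1 + (b - (a + 1)) = b by omega]
    exact List.mem_of_getElem? this
  have h1 : 1 ≤ (T.take (a + 1)).count c := by simpa [List.count_pos_iff] using hmem1
  have h2 : 1 ≤ (T.drop (a + 1)).count c := by simpa [List.count_pos_iff] using hmem2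
  have : T.count c = (T.take (a + 1)).count c + (T.drop (a + 1)).count c := by
    conv_lhs => rw [← List.take_append_drop (a + 1) T]
    rw [List.count_append]
  omega

private lemma pos_unique {α : Type*} [DecidableEq α] {T : List α} {c : α}
    (h : T.count c = 1) {a b : ℕ}
    (ha : T[a]? = some c) (hb : T[b]? = some c) : a = b := by
  rcases lt_trichotomy a b with h' | h' | h'
  · exact absurd (pos_unique' h h' ha hb) (by simp)
  · exact h'
  · exact absurd (pos_unique' h h' hb ha) (by simp)

private lemma endpos_get {α : Type*} {T w : List α} {p : ℕ} (hp : p ∈ EndPos1 T w)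
    {j : ℕ} (hj : j < w.length) : T[p - w.length + j]? = w[j]? := by
  obtain ⟨h1, h2, h3, u, hu⟩ := hp
  have hlen : u.length + w.length = (T.take p).length := by
    rw [← hu]; simp
  rw [List.length_take] at hlen
  have hul : u.length = p - w.length := by omega
  have key : (T.take p)[u.length + j]? = w[j]? := by
    rw [← hu, List.getElem?_append_right (by omega)]
    congr 1; omega
  rw [List.getElem?_take_of_lt (by omega)] at key
  rw [← hul]; exact key

theorem substring_with_inner_separator_occurs_once {α : Type*} [DecidableEq α]
    {k : ℕ} (T : List α) (marks : Fin k → α)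
    (honce : ∀ i, T.count (marks i) = 1)
    (w : List α) (hsub : w <:+: T)
    (hin : ∃ (j : ℕ) (i : Fin k), j + 1 < w.length ∧ w[j]? = some (marks i)) :
    (EndPos1 T w).ncard = 1 := by
  obtain ⟨j, i, hj, hget⟩ := hin
  obtain ⟨s, t, hT⟩ := hsub
  have hwlen : j < w.length := by omega
  have hwpos : 1 ≤ w.length := by omega
  set p := s.length + w.length with hp
  have hTlen : T.length = s.length + w.length + t.length := by
    rw [← hT]; simp; omega
  have hpmem : p ∈ EndPos1 T w := by
    refine ⟨by omega, by omega, by omega, ⟨s, ?_⟩⟩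
    rw [← hT, hp, List.append_assoc, List.take_append, List.take_left']
    simp; omega
  have key : ∀ q ∈ EndPos1 T w, q = p := by
    intro q hq
    have h1 := endpos_get hpmem hwlen
    have h2 := endpos_get hq hwlen
    have hq2 : w.length ≤ q := hq.2.1
    have := pos_unique (honce i) (h2.trans hget) (h1.trans hget)
    omega
  have : EndPos1 T w = {p} := Set.eq_singleton_iff_unique_mem.mpr ⟨hpmem, key⟩
  rw [this, Set.ncard_singleton]
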